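/- For the relation ⊑ defined by β ⊑ α iff α = β + ω^γ for some γ > CB(β): β ⊑ α holds if and only if there is γ > CB(β) such that α is the least ordinal of Cantor-Bendixson rank γ with β ≤ α. -/

import Mathlib

open Ordinal

universe u

/-- Cantor–Bendixson rank: the last exponent of the Cantor normal form (`CB 0 = 0`). -/
noncomputable def CB (o : Ordinal) : Ordinal :=
  ((Ordinal.CNF Ordinal.omega0 o).getLast?).elim 0 Prod.fst

/-- The last coefficient of the Cantor normal form. -/
noncomputable def lastCoeff (o : Ordinal) : Ordinal :=
  ((Ordinal.CNF Ordinal.omega0 o).getLast?).elim 0 Prod.snd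

/-- The position of `o` in its fan: the last coefficient of the Cantor normal form,
with the convention `i(n) = n + 1` for natural numbers `n` (virtually omitting `0`). -/
noncomputable def placeInFan (o : Ordinal) : Ordinal :=
  if o < Ordinal.omega0 then o + 1 else lastCoeff o

/-- The anti-tree order: `treeOrd β α` iff `α = β + ω ^ γ` for some `γ > CB β`. -/
def treeOrd (β α : Ordinal) : Prop :=
  ∃ γ : Ordinal, CB β < γ ∧ α = β + Ordinal.omega0 ^ γ

/-- The immediate `treeOrd`-successor of `β`. -/
noncomputable def treeSucc (β : Ordinal) : Ordinal :=
  β + Ordinal.omega0 ^ (CB β + 1)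

/-- The set of immediate `treeOrd`-predecessors of `α`. -/
def subfan (α : Ordinal) : Set Ordinal := {γ | treeSucc γ = α}

/-- The fan of `β`: the set of immediate predecessors of the immediate successor of `β`. -/
def fan (β : Ordinal) : Set Ordinal := subfan (treeSucc β)

open Classical in
/-- The order type of a set of ordinals: the unique `δ` with `S ≃o Set.Iio δ` (0 if none). -/
noncomputable def otp (S : Set Ordinal.{u}) : Ordinal.{u} :=
  if h : ∃ δ : Ordinal.{u}, Nonempty (S ≃o Set.Iio δ) then h.choose else 0

/-- The image of `α ∈ S` under the unique order-preserving bijection of `S` with `otp S`. -/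
noncomputable def ordIndex (S : Set Ordinal) (α : Ordinal) : Ordinal :=
  otp {x | x ∈ S ∧ x < α}

/-- `I` is closed in the ordinal `δ` (with its order topology). -/
def closedIn (I : Set Ordinal) (δ : Ordinal) : Prop :=
  IsClosed {x : Set.Iio δ | (x : Ordinal) ∈ I}

/-- `X` is closed in its supremum. -/
def ClosedInSup (X : Set Ordinal) : Prop := closedIn X (sSup X)

/-- `I` is a skeleton of the ordinal `δ`. -/
def IsSkelOrd (I : Set Ordinal) (δ : Ordinal) : Prop :=
  I ⊆ Set.Iio δ ∧ closedIn I δ ∧ otp I = δ ∧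
    ∀ α ∈ I, ∀ β ∈ I, (treeOrd α β ↔ treeOrd (ordIndex I α) (ordIndex I β))

/-- `I` is a skeleton of the set `J`. -/
def IsSkelSet (I J : Set Ordinal) : Prop :=
  I ⊆ J ∧ IsSkelOrd (ordIndex J '' I) (otp J)

/-- `I` is an `n`-skeleton of the set `J`. -/
def IsNSkelSet (n : ℕ) (I J : Set Ordinal) : Prop :=
  IsSkelSet I J ∧
    ∀ α ∈ J, (fan α ∩ I).Nonempty → placeInFan (ordIndex J α) ≤ (n : Ordinal) → α ∈ I

/-- A collection `(I i)_{i < γ}` of subsets of `δ` is fan preserving. -/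
def FanPreserving (γ : Ordinal) (I : Ordinal → Set Ordinal) (δ : Ordinal) : Prop :=
  ∀ α ≤ γ, Order.IsSuccLimit α → ∀ β < δ, (∀ i < α, (fan β ∩ I i).Infinite) →
    (fan β ∩ ⋂ i ∈ Set.Iio α, I i).Infinite

/-- Sum of the first `i` terms `ω ^ γ` of a Cantor normal form list. -/
noncomputable def partialSum (l : List Ordinal) (i : ℕ) : Ordinal :=
  ((l.take i).map fun γ => Ordinal.omega0 ^ γ).sum

/-- The `i`-th component `C_i` of the Cantor normal form decomposition (for `1 ≤ i`). -/
noncomputable def comp (l : List Ordinal) (i : ℕ) : Set Ordinal :=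
  {β | partialSum l (i - 1) < β ∧ β ≤ partialSum l i}

/-- `subtree α` is `{α} ∪ {β : β ⊏ α}`. -/
def subtree (α : Ordinal) : Set Ordinal := insert α {β | treeOrd β α}

/-- `Tlevel α n` is the set of elements of CB rank `n` in the tree below `α`. -/
def Tlevel (α : Ordinal) (n : ℕ) : Set Ordinal := {β | β ∈ subtree α ∧ CB β = (n : Ordinal)}

/-- `FpowAux k r j = F(ω^k)^r_{k-j}`, defined by downward recursion. -/
noncomputable def FpowAux (k r : ℕ) : ℕ → Set Ordinal
  | 0 => {Ordinal.omega0 ^ (k : Ordinal)}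
  | j + 1 => {γ | treeSucc γ ∈ FpowAux k r j ∧ (r : Ordinal) < placeInFan γ}

/-- `F(ω^k)^r_n` (for `n ≤ k`). -/
noncomputable def Fpow (k r n : ℕ) : Set Ordinal := FpowAux k r (k - n)

/-- `F(α)^r_n`: the copy of `F(ω^k)^r_n` in the tree below `α`, where `k = CB α`. -/
noncomputable def Fgen (α : Ordinal) (r n : ℕ) : Set Ordinal :=
  {β | β ∈ subtree α ∧ ∃ k : ℕ, (k : Ordinal) = CB α ∧ ordIndex (subtree α) β ∈ Fpow k r n}

/-- The collection of `r`-large subsets of `Tlevel α n`. -/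
def LargeR (α : Ordinal) (r n : ℕ) : Set (Set Ordinal) :=
  {A | A ⊆ Tlevel α n ∧ Fgen α r n ⊆ A}

/-- The collection of large subsets of `Tlevel α n`. -/
def Large (α : Ordinal) (n : ℕ) : Set (Set Ordinal) := ⋃ r : ℕ, LargeR α r n

/-- The closed ordinal partition relation `β →_cl (α₀, α₁)²`. -/
def ClRamseyProp (β α₀ α₁ : Ordinal) : Prop :=
  ∀ c : Ordinal → Ordinal → Fin 2,
    ∃ i : Fin 2, ∃ X : Set Ordinal, X ⊆ Set.Iio β ∧
      otp X = (if i = 0 then α₀ else α₁) ∧ ClosedInSup X ∧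
      ∀ x ∈ X, ∀ y ∈ X, x < y → c x y = i


lemma CB_zero : CB 0 = 0 := by simp [CB, Ordinal.CNF.zero_right]

lemma CB_mod_zero {x : Ordinal} (hx : x ≠ 0) (hr : x % omega0 ^ log omega0 x = 0) :
    CB x = log omega0 x := by
  unfold CB; rw [Ordinal.CNF.ne_zero hx, hr, Ordinal.CNF.zero_right]; simp

lemma CB_mod_ne_zero {x : Ordinal} (hx : x ≠ 0) (hr : x % omega0 ^ log omega0 x ≠ 0) :
    CB x = CB (x % omega0 ^ log omega0 x) := by
  unfold CB
  rw [Ordinal.CNF.ne_zero hx, Ordinal.CNF.ne_zero hr, List.getLast?_cons_cons,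
    ← Ordinal.CNF.ne_zero hr]

lemma opow_CB_dvd : ∀ x : Ordinal, x ≠ 0 → omega0 ^ CB x ∣ x := by
  intro x
  induction x using Ordinal.induction with
  | h x IH =>
    intro hx
    set e := log omega0 x with he
    set r := x % omega0 ^ e with hrdef
    have hxeq : omega0 ^ e * (x / omega0 ^ e) + r = x := Ordinal.div_add_mod x _
    by_cases hr : r = 0
    · rw [CB_mod_zero hx hr]
      have : omega0 ^ e ∣ omega0 ^ e * (x / omega0 ^ e) + r := by
        rw [hr, add_zero]; exact dvd_mul_right _ _
      rwa [hxeq] at this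
    · rw [CB_mod_ne_zero hx hr]
      have hrx : r < x := mod_opow_log_lt_self omega0 hx
      have hIH := IH r hrx hr
      have hre : omega0 ^ CB r < omega0 ^ e := by
        calc omega0 ^ CB r ≤ r := le_of_dvd hr hIH
        _ < omega0 ^ e := mod_lt x (opow_ne_zero e omega0_ne_zero)
      have hCBe : CB r ≤ e := ((opow_lt_opow_iff_right one_lt_omega0).1 hre).le
      have : omega0 ^ CB r ∣ omega0 ^ e * (x / omega0 ^ e) + r :=
        dvd_add ((opow_dvd_opow _ hCBe).mul_right _) hIH
      rwa [hxeq] at this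

lemma le_CB_of_dvd : ∀ x : Ordinal, x ≠ 0 → ∀ γ : Ordinal, omega0 ^ γ ∣ x → γ ≤ CB x := by
  intro x
  induction x using Ordinal.induction with
  | h x IH =>
    intro hx γ hdvd
    have hγe : γ ≤ log omega0 x :=
      (opow_le_iff_le_log one_lt_omega0 hx).1 (le_of_dvd hx hdvd)
    set e := log omega0 x with he
    set r := x % omega0 ^ e with hrdef
    have hxeq : omega0 ^ e * (x / omega0 ^ e) + r = x := Ordinal.div_add_mod x _
    by_cases hr : r = 0
    · rw [CB_mod_zero hx hr]; exact hγe
    · rw [CB_mod_ne_zero hx hr]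
      refine IH r (mod_opow_log_lt_self omega0 hx) hr γ ?_
      have h1 : omega0 ^ γ ∣ omega0 ^ e * (x / omega0 ^ e) :=
        (opow_dvd_opow _ hγe).mul_right _
      exact (Ordinal.dvd_add_iff h1).1 (by rwa [hxeq])

lemma add_opow_eq_mul_succ (β γ : Ordinal) :
    β + omega0 ^ γ = omega0 ^ γ * (β / omega0 ^ γ + 1) := by
  have h1 : omega0 ^ γ * (β / omega0 ^ γ) + β % omega0 ^ γ = β := Ordinal.div_add_mod β _
  have h2 : β % omega0 ^ γ + omega0 ^ γ = omega0 ^ γ :=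
    add_omega0_opow (mod_lt β (opow_ne_zero γ omega0_ne_zero))
  conv_lhs => rw [← h1]
  rw [add_assoc, h2, mul_add_one]

lemma CB_add_opow {β γ : Ordinal} (h : CB β < γ) : CB (β + omega0 ^ γ) = γ := by
  set q := β / omega0 ^ γ with hq
  have hx : β + omega0 ^ γ = omega0 ^ γ * (q + 1) := add_opow_eq_mul_succ β γ
  have hne : β + omega0 ^ γ ≠ 0 := by
    rw [hx]
    exact mul_ne_zero (opow_ne_zero γ omega0_ne_zero)
      (pos_iff_ne_zero.1 ((zero_le (a := q)).trans_lt (lt_add_one q)))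
  have hge : γ ≤ CB (β + omega0 ^ γ) :=
    le_CB_of_dvd _ hne γ ⟨q + 1, hx⟩
  refine le_antisymm ?_ hge
  by_contra hlt
  push_neg at hlt
  have hsucc : γ + 1 ≤ CB (β + omega0 ^ γ) := Order.add_one_le_of_lt hlt
  have hdvd : omega0 ^ (γ + 1) ∣ β + omega0 ^ γ :=
    dvd_trans (opow_dvd_opow _ hsucc) (opow_CB_dvd _ hne)
  obtain ⟨t, ht⟩ := hdvd
  rw [hx, opow_add, opow_one, mul_assoc] at ht
  have hqt : q + 1 = omega0 * t :=
    (mul_right_inj' (opow_pos γ omega0_pos).ne').1 ht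
  have ht0 : t ≠ 0 := by
    rintro rfl
    rw [mul_zero] at hqt
    exact absurd hqt (pos_iff_ne_zero.1 ((zero_le (a := q)).trans_lt (lt_add_one q)))
  have hlim : Order.IsSuccLimit (omega0 * t) := isSuccLimit_mul_left isSuccLimit_omega0 (pos_iff_ne_zero.2 ht0)
  rw [← hqt] at hlim
  exact (lt_irrefl (q + 1)) (by simpa using hlim.succ_lt (lt_add_one q))

lemma least_ge {β x γ : Ordinal} (hx : CB x = γ) (hβ : CB β < γ) (hle : β ≤ x) :
    β + omega0 ^ γ ≤ x := by
  have hxne : x ≠ 0 := by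
    rintro rfl
    rw [CB_zero] at hx
    exact absurd (hx ▸ hβ) (by simp)
  obtain ⟨t, ht⟩ : omega0 ^ γ ∣ x := hx ▸ opow_CB_dvd x hxne
  by_cases hβ0 : β = 0
  · rw [hβ0, zero_add]
    exact le_of_dvd hxne ⟨t, ht⟩
  · set q := β / omega0 ^ γ with hq
    set s := β % omega0 ^ γ with hs
    have hβeq : omega0 ^ γ * q + s = β := Ordinal.div_add_mod β _
    have hs0 : s ≠ 0 := by
      intro h0
      have : omega0 ^ γ ∣ β := Ordinal.dvd_of_mod_eq_zero h0
      exact absurd (le_CB_of_dvd β hβ0 γ this) (not_le_of_gt hβ)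
    have h1 : omega0 ^ γ * q < x := by
      calc omega0 ^ γ * q < omega0 ^ γ * q + s := by
            simpa using pos_iff_ne_zero.2 hs0
        _ = β := hβeq
        _ ≤ x := hle
    rw [ht] at h1 ⊢
    have hqt : q < t := (mul_lt_mul_iff_right₀ (opow_pos γ omega0_pos)).1 h1
    calc β + omega0 ^ γ = omega0 ^ γ * (q + 1) := add_opow_eq_mul_succ β γ
      _ ≤ omega0 ^ γ * t := (mul_le_mul_iff_right₀ (opow_pos γ omega0_pos)).2
          (Order.add_one_le_of_lt hqt)


theorem stmt4 (β α : Ordinal) :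
    treeOrd β α ↔ ∃ γ : Ordinal, CB β < γ ∧ IsLeast {x : Ordinal | CB x = γ ∧ β ≤ x} α := by
  constructor
  · rintro ⟨γ, hγ, rfl⟩
    refine ⟨γ, hγ, ⟨CB_add_opow hγ, le_self_add⟩, ?_⟩
    rintro x ⟨hx1, hx2⟩
    exact least_ge hx1 hγ hx2
  · rintro ⟨γ, hγ, ⟨hmem, hlb⟩⟩
    exact ⟨γ, hγ, le_antisymm (hlb ⟨CB_add_opow hγ, le_self_add⟩)
      (least_ge hmem.1 hγ hmem.2)⟩
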